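/- Let φ: A → B be a ring homomorphism between integral domains with kernel q. If M is a finitely generated A-module such that the localization M_q is a free A_q-module of rank r, then M ⊗_A B is a finitely generated B-module of rank r, i.e., (M ⊗_A B) ⊗_B L ≅ L^r where L is the fraction field of B. -/

import Mathlib

open TensorProduct

/-- If `φ : A → B` is a ring homomorphism of integral domains with kernel `q`, and `M` is a
finitely generated `A`-module such that `M_q` is free of rank `r` over `A_q`, then `M ⊗_A B`
is a `B`-module of rank `r`, i.e. `(M ⊗_A B) ⊗_B L ≅ L^r` where `L` is the fraction field
of `B`. -/
theorem rank_baseChange_of_localization_free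
    {A B : Type*} [CommRing A] [IsDomain A] [CommRing B] [IsDomain B] [Algebra A B]
    {M : Type*} [AddCommGroup M] [Module A M] [Module.Finite A M]
    (q : Ideal A) [q.IsPrime] (hq : q = RingHom.ker (algebraMap A B)) (r : ℕ)
    (hfree : Module.Free (Localization.AtPrime q) (LocalizedModule q.primeCompl M))
    (hrank : Module.finrank (Localization.AtPrime q) (LocalizedModule q.primeCompl M) = r) :
    Module.Finite B (TensorProduct A B M) ∧
      Nonempty ((TensorProduct B (FractionRing B) (TensorProduct A B M))
        ≃ₗ[FractionRing B] (Fin r → FractionRing B)) := by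
  classical
  set L := FractionRing B
  set Aq := Localization.AtPrime q
  -- every element of q.primeCompl becomes a unit in L
  have hu : ∀ s : q.primeCompl, IsUnit (algebraMap A L s) := by
    intro s
    have hb : algebraMap A B s ≠ 0 := by
      intro h
      have hm : (s : A) ∈ RingHom.ker (algebraMap A B) := RingHom.mem_ker.mpr h
      exact s.2 (hq.symm ▸ hm)
    have heq : algebraMap A L s = algebraMap B L (algebraMap A B s) := by
      rw [IsScalarTower.algebraMap_apply A B L]
    rw [heq]
    exact isUnit_iff_ne_zero.2 fun h' => hb (IsFractionRing.to_map_eq_zero_iff.mp h')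
  letI : Algebra Aq L := (IsLocalization.lift (M := q.primeCompl) (S := Aq) hu).toAlgebra
  haveI : IsScalarTower A Aq L :=
    IsScalarTower.of_algebraMap_eq' (IsLocalization.lift_comp (S := Aq) hu).symm
  haveI : Module.Finite Aq (LocalizedModule q.primeCompl M) :=
    Module.Finite.of_isLocalizedModule q.primeCompl (LocalizedModule.mkLinearMap q.primeCompl M)
  -- basis of the localized module
  let b : Module.Basis (Fin r) Aq (LocalizedModule q.primeCompl M) :=
    (Module.finBasis Aq (LocalizedModule q.primeCompl M)).reindex (finCongr hrank)
  -- the localized module is the base change along A → Aq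
  let e3 : Aq ⊗[A] M ≃ₗ[Aq] LocalizedModule q.primeCompl M :=
    (IsLocalizedModule.isBaseChange q.primeCompl Aq
      (LocalizedModule.mkLinearMap q.primeCompl M)).equiv
  let b' : Module.Basis (Fin r) Aq (Aq ⊗[A] M) := b.map e3.symm
  let e1 : L ⊗[B] (B ⊗[A] M) ≃ₗ[L] L ⊗[A] M :=
    AlgebraTensorModule.cancelBaseChange A B L L M
  let e2 : L ⊗[A] M ≃ₗ[L] L ⊗[Aq] (Aq ⊗[A] M) :=
    (AlgebraTensorModule.cancelBaseChange A Aq L L M).symm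
  exact ⟨inferInstance, ⟨e1 ≪≫ₗ e2 ≪≫ₗ (b'.baseChange L).equivFun⟩⟩
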